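/- The functions ψ_c : ℝ → ℝ, ψ_c(x) = e^{|x|^c} - e^{-|x|^c} for c > 0, freely generate an algebra: for any nonzero polynomial P in p variables without constant term and any distinct positive reals c₁,…,c_p, the function x ↦ P(ψ_{c₁}(x),…,ψ_{c_p}(x)) satisfies lim_{x→∞} |P(ψ_{c₁}(x),…,ψ_{c_p}(x))| = +∞; in particular it is not identically zero. -/

import Mathlib

open Filter

private lemma aux_max {α : Type*} (r : α → α → Prop)
    (htrans : ∀ a b c, r a b → r b c → r a c)
    (htot : ∀ a b, a ≠ b → r a b ∨ r b a) :
    ∀ s : Finset α, s.Nonempty → ∃ b ∈ s, ∀ a ∈ s, a ≠ b → r a b := by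
  classical
  intro s
  induction s using Finset.induction_on with
  | empty => intro h; simp at h
  | insert a s ha ih =>
    intro _
    rcases s.eq_empty_or_nonempty with rfl | hs'
    · refine ⟨a, by simp, ?_⟩
      intro x hx hxa
      simp only [Finset.mem_insert, Finset.notMem_empty, or_false] at hx
      exact absurd hx hxa
    · obtain ⟨b, hb, hball⟩ := ih hs'
      by_cases hab : a = b
      · subst hab
        refine ⟨a, Finset.mem_insert_self _ _, ?_⟩
        intro x hx hxa
        rcases Finset.mem_insert.mp hx with rfl | hx
        · exact absurd rfl hxa
        · exact hball x hx hxa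
      · rcases htot a b hab with hrab | hrba
        · refine ⟨b, Finset.mem_insert_of_mem hb, ?_⟩
          intro x hx hxb
          rcases Finset.mem_insert.mp hx with rfl | hx
          · exact hrab
          · exact hball x hx hxb
        · refine ⟨a, Finset.mem_insert_self _ _, ?_⟩
          intro x hx hxa
          rcases Finset.mem_insert.mp hx with rfl | hx
          · exact absurd rfl hxa
          · by_cases hxb : x = b
            · subst hxb; exact hrba
            · exact htrans x b a (hball x hx hxb) hrba

private lemma tendsto_sum_atBot {p : ℕ} (c : Fin p → ℝ) (hc : ∀ i, 0 < c i)
    (d : Fin p → ℝ) (j : Fin p) (hj : d j < 0)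
    (hmax : ∀ i, d i ≠ 0 → i ≠ j → c i < c j) :
    Tendsto (fun x : ℝ => ∑ i, d i * x ^ c i) atTop atBot := by
  classical
  have hlim : Tendsto (fun x : ℝ => ∑ i, d i * x ^ (c i - c j)) atTop (nhds (d j)) := by
    have hdj : (d j) = ∑ i : Fin p, (if i = j then d j else 0) := by simp
    rw [hdj]
    apply tendsto_finset_sum
    intro i _
    by_cases hij : i = j
    · subst hij
      simp only [if_pos rfl, sub_self]
      have : (fun x : ℝ => d i * x ^ (0 : ℝ)) = fun _ : ℝ => d i := by
        funext x; rw [Real.rpow_zero, mul_one]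
      rw [this]
      exact tendsto_const_nhds
    · simp only [if_neg hij]
      by_cases hdi : d i = 0
      · simpa [hdi] using (tendsto_const_nhds : Tendsto (fun _ : ℝ => (0:ℝ)) atTop _)
      · have hlt : c i < c j := hmax i hdi hij
        have h0 : Tendsto (fun x : ℝ => x ^ (c i - c j)) atTop (nhds 0) := by
          have := tendsto_rpow_neg_atTop (y := c j - c i) (by linarith)
          simpa [neg_sub] using this
        simpa using h0.const_mul (d i)
  have hmain := (tendsto_rpow_atTop (hc j)).atTop_mul_neg hj hlim
  refine hmain.congr' ?_
  filter_upwards [eventually_gt_atTop (0:ℝ)] with x hx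
  rw [Finset.mul_sum]
  refine Finset.sum_congr rfl fun i _ => ?_
  rw [show c i = c j + (c i - c j) by ring, Real.rpow_add hx]
  ring

private noncomputable def Efun {p : ℕ} (c : Fin p → ℝ) (m : Fin p →₀ ℕ) (x : ℝ) : ℝ :=
  ∑ i, (m i : ℝ) * x ^ c i

private lemma trich {p : ℕ} (c : Fin p → ℝ) (hc : ∀ i, 0 < c i)
    (hcinj : Function.Injective c) (m m' : Fin p →₀ ℕ) (h : m ≠ m') :
    Tendsto (fun x => Efun c m x - Efun c m' x) atTop atBot ∨
    Tendsto (fun x => Efun c m' x - Efun c m x) atTop atBot := by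
  classical
  set d : Fin p → ℝ := fun i => (m i : ℝ) - (m' i : ℝ) with hd
  have hdne : ∃ i, d i ≠ 0 := by
    by_contra hcon
    push_neg at hcon
    apply h
    ext i
    have h2 := hcon i
    simp only [hd, sub_eq_zero] at h2
    exact_mod_cast h2
  obtain ⟨i0, hi0⟩ := hdne
  have hS : (Finset.univ.filter (fun i => d i ≠ 0)).Nonempty :=
    ⟨i0, by simp [hi0]⟩
  obtain ⟨j, hjmem, hjmax⟩ := Finset.exists_max_image _ c hS
  have hdj : d j ≠ 0 := (Finset.mem_filter.mp hjmem).2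
  have hmax : ∀ i, d i ≠ 0 → i ≠ j → c i < c j := fun i hdi hij =>
    lt_of_le_of_ne (hjmax i (by simp [hdi])) (fun hcc => hij (hcinj hcc))
  have hEq : ∀ x : ℝ, (∑ i, d i * x ^ c i) = Efun c m x - Efun c m' x := by
    intro x
    simp only [Efun, hd, sub_mul, Finset.sum_sub_distrib]
  rcases lt_or_gt_of_ne hdj with hneg | hpos
  · exact Or.inl ((tendsto_sum_atBot c hc d j hneg hmax).congr fun x => hEq x)
  · right
    have hmax' : ∀ i, (fun i => -d i) i ≠ 0 → i ≠ j → c i < c j := by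
      intro i hi hij
      exact hmax i (by simpa using hi) hij
    have hb := tendsto_sum_atBot c hc (fun i => -d i) j (by simpa using hpos) hmax'
    refine hb.congr fun x => ?_
    have : (∑ i, -d i * x ^ c i) = -(∑ i, d i * x ^ c i) := by
      rw [← Finset.sum_neg_distrib]
      exact Finset.sum_congr rfl fun i _ => by ring
    rw [this, hEq x]
    ring

theorem stmt_10 (p : ℕ) (c : Fin p → ℝ) (hc : ∀ i, 0 < c i)
    (hcinj : Function.Injective c)
    (P : MvPolynomial (Fin p) ℝ) (hP : P ≠ 0) (hP0 : MvPolynomial.coeff 0 P = 0) :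
    Tendsto
      (fun x : ℝ => |MvPolynomial.eval
        (fun i => Real.exp (|x| ^ (c i)) - Real.exp (-(|x| ^ (c i)))) P|)
      atTop atTop := by
  classical
  set E : (Fin p →₀ ℕ) → ℝ → ℝ := Efun c with hE
  have hsupp : P.support.Nonempty := MvPolynomial.support_nonempty.mpr hP
  obtain ⟨M, hM, hMmax⟩ := aux_max
    (fun m m' => Tendsto (fun x => E m x - E m' x) atTop atBot)
    (fun a b c' hab hbc => by
      have h := Tendsto.atBot_add_atBot hab hbc
      exact h.congr fun x => by ring)
    (fun a b hab => trich c hc hcinj a b hab)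
    P.support hsupp
  have hcoeffM : P.coeff M ≠ 0 := MvPolynomial.mem_support_iff.mp hM
  have hM0 : M ≠ 0 := by
    intro h; subst h
    exact hcoeffM hP0
  -- E M tends to atTop
  have hEtop : Tendsto (E M) atTop atTop := by
    set d : Fin p → ℝ := fun i => -(M i : ℝ) with hd
    have hdne : ∃ i, M i ≠ 0 := by
      by_contra hcon
      push_neg at hcon
      exact hM0 (Finsupp.ext fun i => hcon i)
    obtain ⟨i0, hi0⟩ := hdne
    have hS : (Finset.univ.filter (fun i => d i ≠ 0)).Nonempty := by
      refine ⟨i0, ?_⟩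
      simp only [Finset.mem_filter, Finset.mem_univ, true_and, hd, neg_ne_zero]
      exact_mod_cast hi0
    obtain ⟨j, hjmem, hjmax⟩ := Finset.exists_max_image _ c hS
    have hdj : d j ≠ 0 := (Finset.mem_filter.mp hjmem).2
    have hdjneg : d j < 0 := by
      have h1 : (0:ℝ) ≤ (M j : ℝ) := Nat.cast_nonneg _
      have h2 : (M j : ℝ) ≠ 0 := by simpa [hd, neg_eq_zero] using hdj
      have : (0:ℝ) < (M j : ℝ) := lt_of_le_of_ne h1 (Ne.symm h2)
      simp only [hd]
      linarith
    have hmax : ∀ i, d i ≠ 0 → i ≠ j → c i < c j := fun i hdi hij =>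
      lt_of_le_of_ne (hjmax i (by simp [hdi])) (fun hcc => hij (hcinj hcc))
    have hb := tendsto_sum_atBot c hc d j hdjneg hmax
    have hneg : Tendsto (fun x => -(E M x)) atTop atBot := by
      refine hb.congr fun x => ?_
      simp only [hE, Efun, hd]
      rw [← Finset.sum_neg_distrib]
      exact Finset.sum_congr rfl fun i _ => by ring
    exact tendsto_neg_atBot_iff.mp hneg
  -- the correction factors
  set W : (Fin p →₀ ℕ) → ℝ → ℝ :=
    fun m x => ∏ i, (1 - Real.exp (-(2 * x ^ c i))) ^ m i with hWdef
  have hW : ∀ m : Fin p →₀ ℕ, Tendsto (W m) atTop (nhds 1) := by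
    intro m
    have h1 : (1:ℝ) = ∏ i : Fin p, (1:ℝ) ^ m i := by simp
    rw [hWdef, h1]
    apply tendsto_finset_prod
    intro i _
    apply Tendsto.pow
    have h2 : Tendsto (fun x : ℝ => -(2 * x ^ c i)) atTop atBot := by
      have := (tendsto_rpow_atTop (hc i)).const_mul_atTop (two_pos)
      exact tendsto_neg_atBot_iff.mpr this
    have h3 : Tendsto (fun x : ℝ => Real.exp (-(2 * x ^ c i))) atTop (nhds 0) :=
      Real.tendsto_exp_atBot.comp h2
    simpa using tendsto_const_nhds.sub h3
  -- the bracket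
  set B : ℝ → ℝ :=
    fun x => ∑ m ∈ P.support, P.coeff m * (Real.exp (E m x - E M x) * W m x) with hBdef
  have hB : Tendsto B atTop (nhds (P.coeff M)) := by
    have h1 : P.coeff M = ∑ m ∈ P.support, (if m = M then P.coeff M else 0) := by
      rw [Finset.sum_ite_eq' P.support M (fun _ => P.coeff M)]
      simp [hM]
    rw [hBdef, h1]
    apply tendsto_finset_sum
    intro m hm
    by_cases hmM : m = M
    · subst hmM
      simp only [if_pos rfl]
      have h2 : Tendsto (fun x => Real.exp (E m x - E m x) * W m x) atTop (nhds 1) := by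
        have := (hW m).const_mul (1:ℝ)
        simpa using this.congr fun x => by simp
      simpa using h2.const_mul (P.coeff m)
    · have hbot := hMmax m hm hmM
      have hexp : Tendsto (fun x => Real.exp (E m x - E M x)) atTop (nhds 0) :=
        Real.tendsto_exp_atBot.comp hbot
      simp only [if_neg hmM]
      simpa using (hexp.mul (hW m)).const_mul (P.coeff m)
  -- eventual equality
  have heq : (fun x : ℝ => |MvPolynomial.eval
        (fun i => Real.exp (|x| ^ (c i)) - Real.exp (-(|x| ^ (c i)))) P|)
      =ᶠ[atTop] fun x => Real.exp (E M x) * |B x| := by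
    filter_upwards [eventually_ge_atTop (0:ℝ)] with x hx
    rw [abs_of_nonneg hx]
    have hev : MvPolynomial.eval (fun i => Real.exp (x ^ c i) - Real.exp (-(x ^ c i))) P
        = Real.exp (E M x) * B x := by
      rw [MvPolynomial.eval_eq', hBdef, Finset.mul_sum]
      refine Finset.sum_congr rfl fun m _ => ?_
      have hprod : (∏ i, (Real.exp (x ^ c i) - Real.exp (-(x ^ c i))) ^ m i)
          = Real.exp (E m x) * W m x := by
        have hfac : ∀ i : Fin p, (Real.exp (x ^ c i) - Real.exp (-(x ^ c i))) ^ m i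
            = Real.exp ((m i : ℝ) * x ^ c i) * (1 - Real.exp (-(2 * x ^ c i))) ^ m i := by
          intro i
          have h1 : Real.exp (x ^ c i) - Real.exp (-(x ^ c i))
              = Real.exp (x ^ c i) * (1 - Real.exp (-(2 * x ^ c i))) := by
            rw [mul_sub, mul_one, ← Real.exp_add]
            ring_nf
          rw [h1, mul_pow, ← Real.exp_nat_mul]
        calc (∏ i, (Real.exp (x ^ c i) - Real.exp (-(x ^ c i))) ^ m i)
            = ∏ i, Real.exp ((m i : ℝ) * x ^ c i) * (1 - Real.exp (-(2 * x ^ c i))) ^ m i :=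
              Finset.prod_congr rfl fun i _ => hfac i
          _ = (∏ i, Real.exp ((m i : ℝ) * x ^ c i)) *
              (∏ i, (1 - Real.exp (-(2 * x ^ c i))) ^ m i) := Finset.prod_mul_distrib
          _ = Real.exp (E m x) * W m x := by
              rw [← Real.exp_sum]
              rfl
      rw [hprod, show E m x = E M x + (E m x - E M x) by ring, Real.exp_add]
      ring
    rw [hev, abs_mul, abs_of_pos (Real.exp_pos _)]
  have hfinal : Tendsto (fun x => Real.exp (E M x) * |B x|) atTop atTop :=
    Tendsto.atTop_mul_pos (abs_pos.mpr hcoeffM) (Real.tendsto_exp_atTop.comp hEtop) hB.abs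
  exact hfinal.congr' heq.symm
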